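/- For every integer d ≥ 2, the fidelity threshold F_th(d) = 2^{-d} + (2^d - 1)(2^d - 2 + sqrt((2^d-2)² + 2^{d+3} d)) / (2^{2d+1} d) satisfies F_th(d) > 3/(2^d + 2). -/

import Mathlib

theorem stmt_4 (d : ℕ) (hd : 2 ≤ d) :
    1 / 2^d + ((2:ℝ)^d - 1) * ((2:ℝ)^d - 2 +
      Real.sqrt (((2:ℝ)^d - 2)^2 + 2^(d+3) * d)) / ((2:ℝ)^(2*d+1) * d)
    > 3 / ((2:ℝ)^d + 2) := by
  have hd2 : (2:ℝ) ≤ (d:ℝ) := by exact_mod_cast hd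
  set N : ℝ := (2:ℝ)^d with hN
  have hN4 : (4:ℝ) ≤ N := by
    calc (4:ℝ) = 2^2 := by norm_num
    _ ≤ 2^d := by
        apply pow_le_pow_right₀ (by norm_num) hd
  have hNd : (d:ℝ) < N + 2 := by
    have : (d:ℝ) < 2^d := by exact_mod_cast Nat.lt_two_pow_self (n := d)
    simp only [hN]; linarith
  have hdpos : (0:ℝ) < d := by linarith
  have hN2 : (0:ℝ) < N + 2 := by linarith
  have hNpos : (0:ℝ) < N := by linarith
  have h8 : (2:ℝ)^(d+3) = 8 * N := by
    show (2:ℝ)^(d+3) = 8 * (2:ℝ)^d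
    rw [pow_add]; ring
  have h2d : (2:ℝ)^(2*d+1) = 2 * N^2 := by
    rw [two_mul, pow_add, pow_add, pow_one]; ring
  set S := Real.sqrt ((N-2)^2 + 2^(d+3) * d) with hS
  have harg : (0:ℝ) ≤ (N-2)^2 + 2^(d+3) * d := by
    have : (0:ℝ) ≤ (2:ℝ)^(d+3) * d := by positivity
    nlinarith [sq_nonneg (N-2)]
  have hSsq : S^2 = (N-2)^2 + 8 * N * d := by
    rw [hS, Real.sq_sqrt harg, h8]
  have hSpos : 0 < S := by
    apply Real.sqrt_pos.mpr
    have : (0:ℝ) < (2:ℝ)^(d+3) * d := by positivity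
    nlinarith [sq_nonneg (N-2)]
  have key : 4*N*(d:ℝ)/(N+2) - (N-2) < S := by
    rcases le_or_gt (4*N*(d:ℝ)/(N+2) - (N-2)) 0 with h | h
    · linarith
    · have hsq : (4*N*(d:ℝ)/(N+2) - (N-2))^2 < S^2 := by
        rw [hSsq]
        rw [div_sub' (ne_of_gt hN2), div_pow, div_lt_iff₀ (by positivity)]
        have hid : ((N-2)^2 + 8*N*(d:ℝ)) * (N+2)^2 - (4*N*(d:ℝ) - (N-2)*(N+2))^2
            = 16*N^2*(d:ℝ)*(N+2-(d:ℝ)) := by ring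
        nlinarith [mul_pos (mul_pos (by positivity : (0:ℝ) < 16*N^2) hdpos)
          (sub_pos.mpr hNd)]
      nlinarith [hSpos]
  have step : 4*N*(d:ℝ) < (S + (N-2)) * (N+2) := by
    have := (div_lt_iff₀ hN2).mp (by linarith : 4*N*(d:ℝ)/(N+2) < S + (N-2))
    linarith
  have hident : 1/N + (N-1)*(N-2+S)/(2*N^2*(d:ℝ)) - 3/(N+2)
      = (N-1) * ((S + (N-2))*(N+2) - 4*N*(d:ℝ)) / (2*N^2*(d:ℝ)*(N+2)) := by
    field_simp
    ring
  have hnum : 0 < (N-1) * ((S + (N-2))*(N+2) - 4*N*(d:ℝ)) / (2*N^2*(d:ℝ)*(N+2)) := by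
    apply div_pos
    · apply mul_pos (by linarith)
      linarith
    · positivity
  have hfinal : 3/(N+2) < 1/N + (N-1)*(N-2+S)/(2*N^2*(d:ℝ)) := by linarith
  rw [gt_iff_lt, h2d]
  convert hfinal using 2
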